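/- Let s and e be composable labelled transition systems, p, p' ∈ Q_s, q, q' ∈ Q_e and σ ∈ (L_{s‖e}^δ)*. If p ⟹(σ↾L_s^δ) p' and q ⟹(σ↾L_e^δ) q', then p ‖ q ⟹σ p' ‖ q'. -/

import Mathlib

/-- Visible labels extended with the quiescence label `δ`. -/
inductive DLabel (A : Type) where
  | act : A → DLabel A
  | δ : DLabel A
deriving DecidableEq

/-- A labelled transition system with state type `S` and label type `A`.
`T p none p'` is an internal (τ) transition; `T p (some a) p'` a visible one.
The set of states is the whole type `S`; the initial state is `q0`. -/
structure LTS (S : Type) (A : Type) where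
  T : S → Option A → S → Prop
  I : Set A
  U : Set A
  q0 : S

namespace LTS

variable {S E F A : Type}

/-- The set of visible labels. -/
def L (s : LTS S A) : Set A := s.I ∪ s.U

/-- Well-formedness of an LTS: countably many states and labels, inputs and
outputs disjoint, and visible transitions labelled in `I ∪ U`. -/
def WF (s : LTS S A) : Prop :=
  Countable S ∧ s.I.Countable ∧ s.U.Countable ∧ Disjoint s.I s.U ∧
    ∀ p a q, s.T p (some a) q → a ∈ s.L

/-- A state is quiescent if it has no output transitions and no τ-transitions. -/
def quiescent (s : LTS S A) (p : S) : Prop :=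
  (∀ x ∈ s.U, ∀ p', ¬ s.T p (some x) p') ∧ (∀ p', ¬ s.T p none p')

/-- Single-step transition relation for δ-extended labels: `δ` is a self-loop
on quiescent states. -/
def dstep (s : LTS S A) (p : S) : DLabel A → S → Prop
  | .act a, p' => s.T p (some a) p'
  | .δ, p' => p = p' ∧ s.quiescent p

/-- `eps p p'`: `p'` is reachable from `p` by finitely many τ-transitions. -/
def eps (s : LTS S A) : S → S → Prop :=
  Relation.ReflTransGen (fun p q => s.T p none q)

/-- Weak transition relation `p ⟹σ p'` over δ-extended traces. -/
def wtrans (s : LTS S A) : S → List (DLabel A) → S → Prop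
  | p, [], p' => s.eps p p'
  | p, ℓ :: σ, p'' => ∃ p1 p2, s.eps p p1 ∧ s.dstep p1 ℓ p2 ∧ s.wtrans p2 σ p''

/-- The δ-extended label set `L^δ` as a set of `DLabel`s. -/
def Ld (s : LTS S A) : Set (DLabel A) := (DLabel.act '' s.L) ∪ {DLabel.δ}

/-- `Utraces s`: δ-extended traces of `s` (from the initial state) that never
pass through a state refusing a subsequent input of the trace. -/
def Utraces (s : LTS S A) : Set (List (DLabel A)) :=
  { σ | (∀ ℓ ∈ σ, ℓ ∈ s.Ld) ∧ (∃ p, s.wtrans s.q0 σ p) ∧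
      ∀ σ1 a σ2, σ = σ1 ++ DLabel.act a :: σ2 → a ∈ s.I →
        ∀ p, s.wtrans s.q0 σ1 p → ∃ p', s.wtrans p [DLabel.act a] p' }

/-- `out p`: the outputs (including quiescence δ) enabled in state `p`. -/
def out (s : LTS S A) (p : S) : Set (DLabel A) :=
  { x | match x with
        | .act a => a ∈ s.U ∧ ∃ p', s.T p (some a) p'
        | .δ => s.quiescent p }

/-- `out` of a set of states. -/
def outSet (s : LTS S A) (P : Set S) : Set (DLabel A) := ⋃ p ∈ P, s.out p

/-- `inp p`: the inputs weakly enabled in state `p`. -/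
def inp (s : LTS S A) (p : S) : Set A :=
  { a | a ∈ s.I ∧ ∃ p', s.wtrans p [DLabel.act a] p' }

/-- The states reached from the initial state after trace `σ`. -/
def after (s : LTS S A) (σ : List (DLabel A)) : Set S :=
  { p' | s.wtrans s.q0 σ p' }

/-- Input-enabledness: every input is weakly enabled in every state. -/
def IOTS (s : LTS S A) : Prop :=
  ∀ q : S, ∀ a ∈ s.I, ∃ q', s.wtrans q [DLabel.act a] q'

/-- Two LTSs are composable iff their output sets are disjoint. -/
def Composable (s : LTS S A) (e : LTS E A) : Prop := Disjoint s.U e.U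

/-- Parallel composition of two LTSs: synchronisation on shared labels,
interleaving on non-shared labels and τ. -/
def par (s : LTS S A) (e : LTS E A) : LTS (S × E) A where
  I := (s.I \ e.U) ∪ (e.I \ s.U)
  U := s.U ∪ e.U
  q0 := (s.q0, e.q0)
  T := fun x ℓ y =>
    (s.T x.1 ℓ y.1 ∧ y.2 = x.2 ∧ (ℓ = none ∨ ∃ a ∈ s.L, ℓ = some a) ∧
      ∀ a ∈ e.L, ℓ ≠ some a) ∨
    (e.T x.2 ℓ y.2 ∧ y.1 = x.1 ∧ (ℓ = none ∨ ∃ a ∈ e.L, ℓ = some a) ∧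
      ∀ a ∈ s.L, ℓ ≠ some a) ∨
    (∃ a ∈ s.L ∩ e.L, ℓ = some a ∧ s.T x.1 (some a) y.1 ∧ e.T x.2 (some a) y.2)

/-- The uioco implementation relation. -/
def uioco (i : LTS E A) (s : LTS S A) : Prop :=
  ∀ σ ∈ s.Utraces, i.outSet (i.after σ) ⊆ s.outSet (s.after σ)

/-- `s.Accepts e`: along every Utrace of `s ‖ e`, every output of `e` that is an
input label of `s` is actually accepted by `s` and is an output of `e`. -/
def Accepts (s : LTS S A) (e : LTS E A) : Prop :=
  ∀ σ ∈ (s.par e).Utraces, ∀ p q, (s.par e).wtrans (s.par e).q0 σ (p, q) →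
    ∀ a, DLabel.act a ∈ e.out q → a ∈ s.I → a ∈ s.inp p ∧ a ∈ e.U

/-- Mutual acceptance. -/
def MutuallyAccepts (s : LTS S A) (e : LTS E A) : Prop := s.Accepts e ∧ e.Accepts s

/-- Isomorphism of LTSs: equal label sets and a bijection on states preserving
the initial state and all transitions (including τ and δ). -/
def Isomorphic (s : LTS S A) (s' : LTS E A) : Prop :=
  s.I = s'.I ∧ s.U = s'.U ∧ ∃ f : S ≃ E, f s.q0 = s'.q0 ∧
    (∀ p p' ℓ, s.T p ℓ p' ↔ s'.T (f p) ℓ (f p')) ∧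
    (∀ p p', s.dstep p DLabel.δ p' ↔ s'.dstep (f p) DLabel.δ (f p'))

open Classical in
/-- Projection of a trace onto a set of labels. -/
noncomputable def proj : List (DLabel A) → Set (DLabel A) → List (DLabel A)
  | [], _ => []
  | ℓ :: σ, 𝓛 => if ℓ ∈ 𝓛 then ℓ :: proj σ 𝓛 else proj σ 𝓛

end LTS

section Aux
open Classical
variable {S E A : Type}

lemma eps_par_left (s : LTS S A) (e : LTS E A) {p p' : S} (q : E)
    (h : s.eps p p') : (s.par e).eps (p, q) (p', q) := by
  induction h with
  | refl => exact Relation.ReflTransGen.refl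
  | tail _ hstep ih =>
    exact ih.tail (Or.inl ⟨hstep, rfl, Or.inl rfl, by simp⟩)

lemma eps_par_right (s : LTS S A) (e : LTS E A) (p : S) {q q' : E}
    (h : e.eps q q') : (s.par e).eps (p, q) (p, q') := by
  induction h with
  | refl => exact Relation.ReflTransGen.refl
  | tail _ hstep ih =>
    exact ih.tail (Or.inr (Or.inl ⟨hstep, rfl, Or.inl rfl, by simp⟩))

lemma eps_par (s : LTS S A) (e : LTS E A) {p p' : S} {q q' : E}
    (h1 : s.eps p p') (h2 : e.eps q q') : (s.par e).eps (p, q) (p', q') :=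
  (eps_par_left s e q h1).trans (eps_par_right s e p' h2)

lemma quiescent_par (s : LTS S A) (e : LTS E A) {p : S} {q : E}
    (h1 : s.quiescent p) (h2 : e.quiescent q) : (s.par e).quiescent (p, q) := by
  constructor
  · rintro x hx ⟨r1, r2⟩ (⟨hT, -, -, hne⟩ | ⟨hT, -, -, hne⟩ | ⟨a, ⟨has, hae⟩, heq, hTs, hTe⟩)
    · have hxs : x ∈ s.U := by
        rcases hx with hx | hx
        · exact hx
        · exact absurd rfl (hne x (Or.inr hx))
      exact h1.1 x hxs r1 hT
    · have hxe : x ∈ e.U := by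
        rcases hx with hx | hx
        · exact absurd rfl (hne x (Or.inr hx))
        · exact hx
      exact h2.1 x hxe r2 hT
    · cases heq
      rcases hx with hx | hx
      · exact h1.1 x hx r1 hTs
      · exact h2.1 x hx r2 hTe
  · rintro ⟨r1, r2⟩ (⟨hT, -⟩ | ⟨hT, -⟩ | ⟨a, -, heq, -⟩)
    · exact h1.2 r1 hT
    · exact h2.2 r2 hT
    · exact nomatch heq

lemma act_mem_Ld_iff (s : LTS S A) (a : A) :
    DLabel.act a ∈ s.Ld ↔ a ∈ s.L := by
  simp [LTS.Ld]

lemma delta_mem_Ld (s : LTS S A) : DLabel.δ ∈ s.Ld := Or.inr rfl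

end Aux

/-- weak transitions of the components along the projected traces
yield a weak transition of the composition. -/
theorem wtrans_par_of_proj {S E A : Type} (s : LTS S A) (e : LTS E A)
    (hs : s.WF) (he : e.WF) (hc : LTS.Composable s e)
    (p p' : S) (q q' : E) (σ : List (DLabel A))
    (hσ : ∀ x ∈ σ, x ∈ (s.par e).Ld)
    (h1 : s.wtrans p (LTS.proj σ s.Ld) p')
    (h2 : e.wtrans q (LTS.proj σ e.Ld) q') :
    (s.par e).wtrans (p, q) σ (p', q') := by
    induction σ generalizing p q with
  | nil =>
    simp only [LTS.proj] at h1 h2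
    exact eps_par s e h1 h2
  | cons ℓ σ ih =>
    have hℓ := hσ ℓ List.mem_cons_self
    have hσ' : ∀ x ∈ σ, x ∈ (s.par e).Ld := fun x hx => hσ x (List.mem_cons_of_mem _ hx)
    cases ℓ with
    | δ =>
      rw [LTS.proj, if_pos (delta_mem_Ld s)] at h1
      rw [LTS.proj, if_pos (delta_mem_Ld e)] at h2
      obtain ⟨p1, p2, hep, ⟨heqp, hqp⟩, hwp⟩ := h1
      obtain ⟨q1, q2, heq, ⟨heqq, hqq⟩, hwq⟩ := h2
      subst heqp; subst heqq
      exact ⟨(p1, q1), (p1, q1), eps_par s e hep heq,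
        ⟨rfl, quiescent_par s e hqp hqq⟩, ih _ _ hσ' hwp hwq⟩
    | act a =>
      have hmem := (act_mem_Ld_iff (s.par e) a).mp hℓ
      simp only [LTS.L, LTS.par, Set.mem_union, Set.mem_diff] at hmem
      by_cases has : a ∈ s.L <;> by_cases hae : a ∈ e.L
      · rw [LTS.proj, if_pos ((act_mem_Ld_iff s a).mpr has)] at h1
        rw [LTS.proj, if_pos ((act_mem_Ld_iff e a).mpr hae)] at h2
        obtain ⟨p1, p2, hep, hdp, hwp⟩ := h1
        obtain ⟨q1, q2, heq, hdq, hwq⟩ := h2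
        exact ⟨(p1, q1), (p2, q2), eps_par s e hep heq,
          Or.inr (Or.inr ⟨a, ⟨has, hae⟩, rfl, hdp, hdq⟩), ih _ _ hσ' hwp hwq⟩
      · rw [LTS.proj, if_pos ((act_mem_Ld_iff s a).mpr has)] at h1
        rw [LTS.proj, if_neg (fun h => hae ((act_mem_Ld_iff e a).mp h))] at h2
        obtain ⟨p1, p2, hep, hdp, hwp⟩ := h1
        exact ⟨(p1, q), (p2, q), eps_par_left s e q hep,
          Or.inl ⟨hdp, rfl, Or.inr ⟨a, has, rfl⟩,
            fun b hb hb' => hae (by cases Option.some.inj hb'; exact hb)⟩,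
          ih _ _ hσ' hwp h2⟩
      · rw [LTS.proj, if_neg (fun h => has ((act_mem_Ld_iff s a).mp h))] at h1
        rw [LTS.proj, if_pos ((act_mem_Ld_iff e a).mpr hae)] at h2
        obtain ⟨q1, q2, heq, hdq, hwq⟩ := h2
        exact ⟨(p, q1), (p, q2), eps_par_right s e p heq,
          Or.inr (Or.inl ⟨hdq, rfl, Or.inr ⟨a, hae, rfl⟩,
            fun b hb hb' => has (by cases Option.some.inj hb'; exact hb)⟩),
          ih _ _ hσ' h1 hwq⟩
      · exfalso
        rcases hmem with (⟨h, -⟩ | ⟨h, -⟩) | (h | h)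
        · exact has (Or.inl h)
        · exact hae (Or.inl h)
        · exact has (Or.inr h)
        · exact hae (Or.inr h)
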